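/- Let G be a topological group with identity e. Define α : G → Aut(G̃) on the path-construction universal cover G̃ by α_g([h]) = [t ↦ g·h(t)·g⁻¹]. Then α is well-defined, each α_g is a group automorphism of G̃, and the pair (τ, α) satisfies the crossed module identities: α_{τ([h])}([h']) = [h][h'][h]⁻¹ and τ(α_g([h])) = g·τ([h])·g⁻¹. -/

import Mathlib

namespace PathCurv

variable {G : Type*} [Group G] [TopologicalSpace G] [IsTopologicalGroup G]

/-- The pointwise product of two paths starting at the identity of a topological group. -/
def mulPath {a b : G} (h : Path (1 : G) a) (h' : Path (1 : G) b) : Path (1 : G) (a * b) :=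
  ⟨⟨fun t => h t * h' t, h.continuous.mul h'.continuous⟩, by simp, by simp⟩

/-- The pointwise inverse of a path starting at the identity. -/
def invPath {a : G} (h : Path (1 : G) a) : Path (1 : G) a⁻¹ :=
  ⟨⟨fun t => (h t)⁻¹, h.continuous.inv⟩, by simp, by simp⟩

/-- The pointwise conjugate `t ↦ g·h(t)·g⁻¹` of a path starting at the identity. -/
def conjPath {a : G} (g : G) (h : Path (1 : G) a) : Path (1 : G) (g * a * g⁻¹) :=
  ⟨⟨fun t => g * h t * g⁻¹,
      (continuous_const.mul h.continuous).mul continuous_const⟩, by simp, by simp⟩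

end PathCurv

section Aux

variable {X : Type*} [TopologicalSpace X]

theorem homotopic_of_eq' {x y : X} {p q : Path x y} (h : p = q) : p.Homotopic q :=
  h ▸ Path.Homotopic.refl p

theorem homotopic_cast' {x y x' y' : X} {p q : Path x y} (hx : x' = x) (hy : y' = y)
    (h : p.Homotopic q) : (p.cast hx hy).Homotopic (q.cast hx hy) := by
  subst hx; subst hy
  exact (homotopic_of_eq' (by ext t; rfl)).trans
    (h.trans (homotopic_of_eq' (by ext t; rfl)))

end Aux

open PathCurv in
/-- The conjugation action `α_g([h]) = [t ↦ g·h(t)·g⁻¹]` on the path-construction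
universal cover `G̃` of a topological group `G` is well-defined on homotopy classes,
each `α_g` is a group automorphism of `G̃` (multiplicative and inverted by `α_{g⁻¹}`),
and together with endpoint evaluation `τ` it satisfies the crossed module identities:
`α_{τ([h])}([h']) = [h]·[h']·[h]⁻¹` and `τ(α_g([h])) = g·τ([h])·g⁻¹`. -/
theorem universalCover_conj_crossedModule
    {G : Type*} [Group G] [TopologicalSpace G] [IsTopologicalGroup G] :
    -- well-definedness on homotopy classes
    (∀ (a g : G) (h₀ h₁ : Path (1 : G) a), h₀.Homotopic h₁ →
        (conjPath g h₀).Homotopic (conjPath g h₁)) ∧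
    -- each `α_g` is multiplicative
    (∀ (a b g : G) (h : Path (1 : G) a) (h' : Path (1 : G) b),
        (conjPath g (mulPath h h')).Homotopic
          ((mulPath (conjPath g h) (conjPath g h')).cast rfl (by group))) ∧
    -- `α_{g⁻¹}` inverts `α_g`, so each `α_g` is an automorphism
    (∀ (a g : G) (h : Path (1 : G) a),
        ((conjPath g⁻¹ (conjPath g h)).cast rfl (by group)).Homotopic h) ∧
    -- Peiffer identity: `α_{τ([h])}([h']) = [h]·[h']·[h]⁻¹`
    (∀ (a b : G) (h : Path (1 : G) a) (h' : Path (1 : G) b),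
        (conjPath a h').Homotopic (mulPath (mulPath h h') (invPath h))) ∧
    -- equivariance: `τ(α_g([h])) = g·τ([h])·g⁻¹`
    (∀ (a g : G) (h : Path (1 : G) a), (conjPath g h) 1 = g * h 1 * g⁻¹) := by
  refine ⟨?_, ?_, ?_, ?_, ?_⟩
  · -- well-definedness
    intro a g h₀ h₁ hh
    set f : C(G, G) := ⟨fun x => g * x * g⁻¹,
      (continuous_const.mul continuous_id).mul continuous_const⟩ with hf
    have key := (hh.map f)
    have e₀ : conjPath g h₀ = (h₀.map f.continuous).cast (by simp [hf]) (by simp [hf]) := by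
      ext t; rfl
    have e₁ : conjPath g h₁ = (h₁.map f.continuous).cast (by simp [hf]) (by simp [hf]) := by
      ext t; rfl
    rw [e₀, e₁]
    exact homotopic_cast' _ _ key
  · -- multiplicativity
    intro a b g h h'
    refine homotopic_of_eq' ?_
    ext t
    show g * (h t * h' t) * g⁻¹ = g * h t * g⁻¹ * (g * h' t * g⁻¹)
    group
  · -- inverse
    intro a g h
    refine homotopic_of_eq' ?_
    ext t
    show g⁻¹ * (g * h t * g⁻¹) * g⁻¹⁻¹ = h t
    group
  · -- Peiffer identity
    intro a b h h'
    set σ : unitInterval → unitInterval := unitInterval.symm with hσ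
    have hσc : Continuous σ := unitInterval.continuous_symm
    set u : unitInterval × unitInterval → unitInterval := fun p => σ (p.1 * σ p.2) with hu
    have hmulc : Continuous (fun p : unitInterval × unitInterval => p.1 * σ p.2) := by
      apply continuous_induced_rng.2
      show Continuous fun p : unitInterval × unitInterval => ((p.1 * σ p.2 : unitInterval) : ℝ)
      simp only [Set.Icc.coe_mul]
      exact (continuous_subtype_val.comp continuous_fst).mul
        ((continuous_subtype_val.comp hσc).comp continuous_snd)
    have huc : Continuous u := hσc.comp hmulc
    refine ⟨⟨⟨⟨fun p => h (u p) * h' p.2 * (h (u p))⁻¹,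
        ((h.continuous.comp huc).mul (h'.continuous.comp continuous_snd)).mul
          (h.continuous.comp huc).inv⟩, ?_, ?_⟩, ?_⟩⟩
    · intro t
      show h (u (0, t)) * h' t * (h (u (0, t)))⁻¹ = a * h' t * a⁻¹
      have : u (0, t) = 1 := by
        simp [hu, hσ, unitInterval.symm]
      rw [this]; simp
    · intro t
      show h (u (1, t)) * h' t * (h (u (1, t)))⁻¹ = h t * h' t * (h t)⁻¹
      have : u (1, t) = t := by
        simp [hu, hσ]
      rw [this]
    · intro s t ht
      rcases ht with ht | ht
      · subst ht
        show h (u (s, 0)) * h' 0 * (h (u (s, 0)))⁻¹ = a * h' 0 * a⁻¹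
        simp
      · simp only [Set.mem_singleton_iff] at ht
        subst ht
        show h (u (s, 1)) * h' 1 * (h (u (s, 1)))⁻¹ = a * h' 1 * a⁻¹
        have : u (s, 1) = 1 := by
          simp [hu, hσ]
        rw [this]; simp
  · intro a g h; rfl
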